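/- For every x ≥ 1, the maximizer t(x) ∈ (0, x) of t ↦ τ(x,t) (i.e., the unique zero in (0,x) of ∂τ/∂t(x,·)) satisfies (x+1)²/(2x+3) ≤ t(x) < x. -/

import Mathlib

noncomputable def tau (x t : ℝ) : ℝ := (1/x) * (t - (t + x + 1) * (t/(1+t)) ^ (x+1))

/-- Second-order Bernoulli: for `p ≥ 2`, `s ≥ 0`. -/
lemma bern2 {p s : ℝ} (hp : 2 ≤ p) (hs : 0 ≤ s) :
    1 + p*s + p*(p-1)/2*s^2 ≤ (1+s)^p := by
  set f : ℝ → ℝ := fun u => (1+u)^p - (1 + p*u + p*(p-1)/2*u^2) with hf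
  have key : ∀ u : ℝ, 0 < 1 + u →
      HasDerivAt f (p*((1+u)^(p-1) - (1+(p-1)*u))) u := by
    intro u hu
    have h1 : HasDerivAt (fun y : ℝ => 1+y) 1 u := by
      simpa using (hasDerivAt_id u).const_add (1:ℝ)
    have h2 := h1.rpow_const (p := p) (Or.inl hu.ne')
    have h3 : HasDerivAt (fun y : ℝ => 1 + p*y + p*(p-1)/2*y^2)
        (p*1 + p*(p-1)/2*(↑2*u^1)) u := by
      exact (((hasDerivAt_id u).const_mul p).const_add 1).add
        ((hasDerivAt_pow 2 u).const_mul (p*(p-1)/2))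
    have := h2.sub h3
    refine this.congr_deriv ?_
    push_cast
    ring
  have mono : MonotoneOn f (Set.Ici 0) := by
    apply monotoneOn_of_deriv_nonneg (convex_Ici 0)
    · apply ContinuousOn.sub
      · exact ((continuous_const.add continuous_id).rpow_const
          (fun y => Or.inr (by linarith))).continuousOn
      · fun_prop
    · intro u hu
      rw [interior_Ici] at hu
      exact ((key u (by have : (0:ℝ) < u := hu; linarith)).differentiableAt).differentiableWithinAt
    · intro u hu
      rw [interior_Ici] at hu
      have hu' : (0:ℝ) < u := hu
      rw [(key u (by linarith)).deriv]
      have hb := one_add_mul_self_le_rpow_one_add (s := u) (by linarith)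
        (p := p-1) (by linarith)
      have : 0 ≤ (1+u)^(p-1) - (1+(p-1)*u) := by linarith
      positivity
  have h0 : f 0 = 0 := by simp [hf]
  have := mono (Set.mem_Ici.2 le_rfl) (Set.mem_Ici.2 hs) hs
  rw [h0] at this
  simp only [hf] at this
  linarith

/-- Third-order Bernoulli: for `p ≥ 3`, `s ≥ 0`. -/
lemma bern3 {p s : ℝ} (hp : 3 ≤ p) (hs : 0 ≤ s) :
    1 + p*s + p*(p-1)/2*s^2 + p*(p-1)*(p-2)/6*s^3 ≤ (1+s)^p := by
  set f : ℝ → ℝ := fun u => (1+u)^p - (1 + p*u + p*(p-1)/2*u^2 + p*(p-1)*(p-2)/6*u^3) with hf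
  have key : ∀ u : ℝ, 0 < 1 + u →
      HasDerivAt f (p*((1+u)^(p-1) - (1+(p-1)*u+(p-1)*(p-2)/2*u^2))) u := by
    intro u hu
    have h1 : HasDerivAt (fun y : ℝ => 1+y) 1 u := by
      simpa using (hasDerivAt_id u).const_add (1:ℝ)
    have h2 := h1.rpow_const (p := p) (Or.inl hu.ne')
    have h3 : HasDerivAt (fun y : ℝ => 1 + p*y + p*(p-1)/2*y^2 + p*(p-1)*(p-2)/6*y^3)
        (p*1 + p*(p-1)/2*(↑2*u^1) + p*(p-1)*(p-2)/6*(↑3*u^2)) u := by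
      exact ((((hasDerivAt_id u).const_mul p).const_add 1).add
        ((hasDerivAt_pow 2 u).const_mul (p*(p-1)/2))).add
        ((hasDerivAt_pow 3 u).const_mul (p*(p-1)*(p-2)/6))
    have := h2.sub h3
    refine this.congr_deriv ?_
    push_cast
    ring
  have mono : MonotoneOn f (Set.Ici 0) := by
    apply monotoneOn_of_deriv_nonneg (convex_Ici 0)
    · apply ContinuousOn.sub
      · exact ((continuous_const.add continuous_id).rpow_const
          (fun y => Or.inr (by linarith))).continuousOn
      · fun_prop
    · intro u hu
      rw [interior_Ici] at hu
      exact ((key u (by have : (0:ℝ) < u := hu; linarith)).differentiableAt).differentiableWithinAt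
    · intro u hu
      rw [interior_Ici] at hu
      have hu' : (0:ℝ) < u := hu
      rw [(key u (by linarith)).deriv]
      have hb := bern2 (p := p-1) (s := u) (by linarith) (by linarith)
      have : 0 ≤ (1+u)^(p-1) - (1+(p-1)*u+(p-1)*(p-2)/2*u^2) := by linarith
      positivity
  have h0 : f 0 = 0 := by simp [hf]
  have := mono (Set.mem_Ici.2 le_rfl) (Set.mem_Ici.2 hs) hs
  rw [h0] at this
  simp only [hf] at this
  linarith

/-- Value bound: the polynomial side at `v_T` is less than `((x+2)/(x+1))^(2x)`. -/
lemma stepb_core {x : ℝ} (hx : 1 ≤ x) :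
    1 + x*((2*x+3)/(x+2)^2) + x*(x+1)*((2*x+3)/(x+2)^2)^2
      < ((x+2)/(x+1)) ^ (2*x) := by
  have hx1 : (0:ℝ) < x + 1 := by linarith
  have hx2 : (0:ℝ) < x + 2 := by linarith
  have hxx : (0:ℝ) < x := by linarith
  set c : ℝ := 1/(x+1) with hc
  have hcpos : 0 < c := by positivity
  have hbase : (x+2)/(x+1) = 1 + c := by
    rw [hc]; field_simp; ring
  have h1c : (0:ℝ) < 1 + c := by linarith
  have hE2 : ((1+c) ^ (x+1))^2 = (1+c)^(2*x) * (1+c)^2 := by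
    rw [← Real.rpow_natCast ((1+c)^(x+1)) 2, ← Real.rpow_mul h1c.le,
      ← Real.rpow_natCast (1+c) 2, ← Real.rpow_add h1c]
    congr 1
    push_cast
    ring
  have hN : 1 + x*((2*x+3)/(x+2)^2) + x*(x+1)*((2*x+3)/(x+2)^2)^2
      = ((x+2)^4 + x*(2*x+3)*(x+2)^2 + x*(x+1)*(2*x+3)^2) / (x+2)^4 := by
    field_simp
  have hc2 : (1+c)^2 = (x+2)^2/(x+1)^2 := by rw [← hbase, div_pow]
  have hmain : (1 + x*((2*x+3)/(x+2)^2) + x*(x+1)*((2*x+3)/(x+2)^2)^2) * (1+c)^2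
      < ((1+c) ^ (x+1))^2 := by
    rcases le_or_gt x 2 with hx2' | hx2'
    · -- use bern2 with p = x+1 ≥ 2
      have hb := bern2 (p := x+1) (s := c) (by linarith) hcpos.le
      have hBval : 1 + (x+1)*c + (x+1)*((x+1)-1)/2*c^2 = (5*x+4)/(2*(x+1)) := by
        rw [hc]; field_simp; ring
      rw [hBval] at hb
      have hBpos : 0 < (5*x+4)/(2*(x+1)) := by positivity
      have hsq : ((5*x+4)/(2*(x+1)))^2 ≤ ((1+c)^(x+1))^2 :=
        pow_le_pow_left₀ hBpos.le hb 2
      refine lt_of_lt_of_le ?_ hsq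
      rw [hN, hc2, div_pow, div_mul_div_comm, div_lt_div_iff₀ (by positivity) (by positivity)]
      have hid : (5*x+4)^2 * ((x+2)^4*(x+1)^2)
          - ((x+2)^4 + x*(2*x+3)*(x+2)^2 + x*(x+1)*(2*x+3)^2) * (x+2)^2 * ((2*(x+1))^2)
          = (x+1)^2*(x+2)^2*(12*x + 16*x^2 - 3*x^4) := by ring
      have hxsq : x^2 ≤ 4 := by nlinarith
      have hA : 0 < 12*x + 16*x^2 - 3*x^4 := by nlinarith [sq_nonneg x]
      have hP : 0 < (x+1)^2*(x+2)^2*(12*x + 16*x^2 - 3*x^4) :=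
        mul_pos (by positivity) hA
      linarith
    · -- use bern3 with p = x+1 ≥ 3
      have hb := bern3 (p := x+1) (s := c) (by linarith) hcpos.le
      have hBval : 1 + (x+1)*c + (x+1)*((x+1)-1)/2*c^2 + (x+1)*((x+1)-1)*((x+1)-2)/6*c^3
          = (8*x^2+13*x+6)/(3*(x+1)^2) := by
        rw [hc]; field_simp; ring
      rw [hBval] at hb
      have hBpos : 0 < (8*x^2+13*x+6)/(3*(x+1)^2) := by positivity
      have hsq : ((8*x^2+13*x+6)/(3*(x+1)^2))^2 ≤ ((1+c)^(x+1))^2 :=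
        pow_le_pow_left₀ hBpos.le hb 2
      refine lt_of_lt_of_le ?_ hsq
      rw [hN, hc2, div_pow, div_mul_div_comm, div_lt_div_iff₀ (by positivity) (by positivity)]
      have hid : (8*x^2+13*x+6)^2 * ((x+2)^4*(x+1)^2)
          - ((x+2)^4 + x*(2*x+3)*(x+2)^2 + x*(x+1)*(2*x+3)^2) * (x+2)^2 * ((3*(x+1)^2)^2)
          = (x+1)^2*(x+2)^2*(x^6 + 23*x^5 + 75*x^4 + 86*x^3 + 37*x^2 + 3*x) := by ring
      have hA : 0 < x^6 + 23*x^5 + 75*x^4 + 86*x^3 + 37*x^2 + 3*x := by positivity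
      have hP : 0 < (x+1)^2*(x+2)^2*(x^6 + 23*x^5 + 75*x^4 + 86*x^3 + 37*x^2 + 3*x) :=
        mul_pos (by positivity) hA
      linarith
  have hc2pos : (0:ℝ) < (1+c)^2 := by positivity
  rw [hbase]
  have h1 : 1 + x*((2*x+3)/(x+2)^2) + x*(x+1)*((2*x+3)/(x+2)^2)^2
      < ((1+c)^(x+1))^2/(1+c)^2 := (lt_div_iff₀ hc2pos).2 hmain
  have h2 : ((1+c)^(x+1))^2/(1+c)^2 = (1+c)^(2*x) := by
    rw [hE2, mul_div_assoc, div_self (ne_of_gt hc2pos), mul_one]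
  rwa [h2] at h1

/-- `G(v) = (1-v)^x (1+xv+x(x+1)v^2)` is antitone on `[v_T, 1]`. -/
lemma Ganti {x : ℝ} (hx : 1 ≤ x) :
    AntitoneOn (fun v : ℝ => (1-v)^x * (1+x*v+x*(x+1)*v^2))
      (Set.Icc ((2*x+3)/(x+2)^2) 1) := by
  have hx2 : (0:ℝ) < x + 2 := by linarith
  have hvT : 0 < (2*x+3)/(x+2)^2 := by positivity
  have hkey : ∀ v ∈ Set.Ioo ((2*x+3)/(x+2)^2) 1,
      HasDerivAt (fun v : ℝ => (1-v)^x * (1+x*v+x*(x+1)*v^2))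
        ((0-1)*x*(1-v)^(x-1) * (1+x*v+x*(x+1)*v^2)
          + (1-v)^x * (x*1 + x*(x+1)*(↑2*v^1))) v := by
    intro v hv
    have h1v : (0:ℝ) < 1 - v := by linarith [hv.2]
    have hf : HasDerivAt (fun v : ℝ => (1-v)^x) ((0-1)*x*(1-v)^(x-1)) v :=
      ((hasDerivAt_const v (1:ℝ)).sub (hasDerivAt_id v)).rpow_const (Or.inl h1v.ne')
    have hg : HasDerivAt (fun v : ℝ => 1+x*v+x*(x+1)*v^2) (x*1 + x*(x+1)*(↑2*v^1)) v := by
      have h1 := ((hasDerivAt_id v).const_mul x).const_add 1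
      have h2 := (hasDerivAt_pow 2 v).const_mul (x*(x+1))
      exact (h1.add h2).congr_deriv (by norm_num)
    exact hf.mul hg
  apply antitoneOn_of_deriv_nonpos (convex_Icc _ _)
  · apply ContinuousOn.mul
    · exact ((continuous_const.sub continuous_id).rpow_const
        (fun v => Or.inr (by linarith))).continuousOn
    · fun_prop
  · rw [interior_Icc]
    intro v hv
    exact (hkey v hv).differentiableAt.differentiableWithinAt
  · rw [interior_Icc]
    intro v hv
    rw [(hkey v hv).deriv]
    have h1v : (0:ℝ) < 1 - v := by linarith [hv.2]
    have hrw : (1-v)^x = (1-v)^(x-1) * (1-v) := by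
      have h := Real.rpow_add h1v (x-1) 1
      rw [Real.rpow_one, show x - 1 + 1 = x from by ring] at h
      exact h
    have hfac : (0-1)*x*(1-v)^(x-1) * (1+x*v+x*(x+1)*v^2)
          + (1-v)^x * (x*1 + x*(x+1)*(↑2*v^1))
        = (1-v)^(x-1) * (x*(x+1)*v*(1 - (x+2)*v)) := by
      rw [hrw]; push_cast; ring
    rw [hfac]
    apply mul_nonpos_of_nonneg_of_nonpos (Real.rpow_nonneg h1v.le _)
    have hvT' : (2*x+3)/(x+2)^2 ≤ v := hv.1.le
    have hv0 : (0:ℝ) < v := lt_of_lt_of_le hvT hvT'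
    apply mul_nonpos_of_nonneg_of_nonpos (by positivity)
    -- 1 - (x+2) v ≤ 0  since  v ≥ (2x+3)/(x+2)^2 ≥ 1/(x+2)
    have h1 : 1/(x+2) ≤ (2*x+3)/(x+2)^2 := by
      rw [div_le_div_iff₀ hx2 (by positivity)]
      nlinarith
    have h2 : 1/(x+2) ≤ v := le_trans h1 hvT'
    rw [div_le_iff₀ hx2] at h2
    nlinarith

/-- Key inequality: below the threshold the critical-point equation cannot hold. -/
lemma keyv {x v : ℝ} (hx : 1 ≤ x) (hv1 : (2*x+3)/(x+2)^2 ≤ v) (hv2 : v < 1) :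
    (1-v)^x * (1+x*v+x*(x+1)*v^2) < 1 := by
  have hx1 : (0:ℝ) < x + 1 := by linarith
  have hx2 : (0:ℝ) < x + 2 := by linarith
  have hvTlt1 : (2*x+3)/(x+2)^2 < 1 := by
    rw [div_lt_one (by positivity)]; nlinarith
  have hmem1 : (2*x+3)/(x+2)^2 ∈ Set.Icc ((2*x+3)/(x+2)^2) 1 := ⟨le_rfl, hvTlt1.le⟩
  have hmem2 : v ∈ Set.Icc ((2*x+3)/(x+2)^2) 1 := ⟨hv1, hv2.le⟩
  have hmono := Ganti hx hmem1 hmem2 hv1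
  refine lt_of_le_of_lt hmono ?_
  set vT : ℝ := (2*x+3)/(x+2)^2 with hvT
  show (1-vT)^x * (1+x*vT+x*(x+1)*vT^2) < 1
  have h1vT : 1 - vT = ((x+1)/(x+2))^2 := by
    rw [hvT, div_pow]; field_simp; ring
  have hb : (0:ℝ) ≤ (x+1)/(x+2) := by positivity
  have hpow : (1-vT)^x = ((x+1)/(x+2))^(2*x) := by
    rw [h1vT, ← Real.rpow_natCast ((x+1)/(x+2)) 2, ← Real.rpow_mul hb]
    norm_num
  rw [hpow]
  have hstep := stepb_core hx
  have hinv : ((x+1)/(x+2)) ^ (2*x) = (((x+2)/(x+1)) ^ (2*x))⁻¹ := by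
    rw [← Real.inv_rpow (by positivity)]
    congr 1
    rw [inv_div]
  have hp : (0:ℝ) < ((x+2)/(x+1)) ^ (2*x) := Real.rpow_pos_of_pos (by positivity) _
  rw [hinv]
  calc (((x+2)/(x+1)) ^ (2*x))⁻¹ * (1+x*vT+x*(x+1)*vT^2)
      < (((x+2)/(x+1)) ^ (2*x))⁻¹ * (((x+2)/(x+1)) ^ (2*x)) := by
        apply mul_lt_mul_of_pos_left _ (by positivity)
        exact hstep
    _ = 1 := inv_mul_cancel₀ hp.ne'

theorem stmt8 : ∀ x : ℝ, 1 ≤ x → ∀ t₀ : ℝ, t₀ ∈ Set.Ioo 0 x →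
    deriv (fun t => tau x t) t₀ = 0 →
    (x+1)^2/(2*x+3) ≤ t₀ ∧ t₀ < x := by
  intro x hx t₀ ht hderiv
  refine ⟨?_, ht.2⟩
  by_contra hcon
  push_neg at hcon
  have ht0 : 0 < t₀ := ht.1
  have hw : (0:ℝ) < 1 + t₀ := by linarith
  have hu : 0 < t₀/(1+t₀) := by positivity
  have hx0 : (0:ℝ) < x := by linarith
  have hdiv : HasDerivAt (fun t : ℝ => t/(1+t)) ((1*(1+t₀) - t₀*1)/(1+t₀)^2) t₀ :=
    (hasDerivAt_id t₀).div ((hasDerivAt_id t₀).const_add 1) hw.ne'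
  have hpow : HasDerivAt (fun t : ℝ => (t/(1+t))^(x+1))
      (((1*(1+t₀) - t₀*1)/(1+t₀)^2) * (x+1) * (t₀/(1+t₀))^(x+1-1)) t₀ :=
    hdiv.rpow_const (Or.inl hu.ne')
  have hlin : HasDerivAt (fun t : ℝ => t + x + 1) 1 t₀ := by
    simpa using ((hasDerivAt_id t₀).add_const x).add_const 1
  have hmul := hlin.mul hpow
  have htau : HasDerivAt (fun t => tau x t)
      ((1/x) * (1 - (1 * (t₀/(1+t₀))^(x+1) + (t₀+x+1) *
        (((1*(1+t₀) - t₀*1)/(1+t₀)^2) * (x+1) * (t₀/(1+t₀))^(x+1-1))))) t₀ := by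
    have h0 : (fun t => tau x t)
        = fun t => (1/x) * (t - (t + x + 1) * (t/(1+t)) ^ (x+1)) := rfl
    rw [h0]
    exact ((hasDerivAt_id t₀).sub hmul).const_mul (1/x)
  have hD : (1/x) * (1 - (1 * (t₀/(1+t₀))^(x+1) + (t₀+x+1) *
      (((1*(1+t₀) - t₀*1)/(1+t₀)^2) * (x+1) * (t₀/(1+t₀))^(x+1-1)))) = 0 := by
    rw [← htau.deriv]; exact hderiv
  rw [show x + 1 - 1 = x from by ring,
    show (t₀/(1+t₀))^(x+1) = (t₀/(1+t₀))^x * (t₀/(1+t₀)) from by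
      rw [Real.rpow_add hu, Real.rpow_one]] at hD
  set U : ℝ := (t₀/(1+t₀))^x with hU
  have hA : 1 * (U * (t₀/(1+t₀))) + (t₀+x+1) *
      (((1*(1+t₀) - t₀*1)/(1+t₀)^2) * (x+1) * U) = 1 := by
    rcases mul_eq_zero.mp hD with h | h
    · exact absurd h (by positivity)
    · linarith
  set v : ℝ := 1/(1+t₀) with hv
  have hco : (1:ℝ) + x*v + x*(x+1)*v^2
      = t₀/(1+t₀) + (t₀+x+1) * (((1*(1+t₀) - t₀*1)/(1+t₀)^2) * (x+1)) := by
    rw [hv]; field_simp; ring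
  have hEq : (1-v)^x * (1 + x*v + x*(x+1)*v^2) = 1 := by
    have h1v : 1 - v = t₀/(1+t₀) := by rw [hv]; field_simp; ring
    rw [h1v, ← hU, hco]
    calc U * (t₀/(1+t₀) + (t₀+x+1) * (((1*(1+t₀) - t₀*1)/(1+t₀)^2) * (x+1)))
        = 1 * (U * (t₀/(1+t₀))) + (t₀+x+1) *
          (((1*(1+t₀) - t₀*1)/(1+t₀)^2) * (x+1) * U) := by ring
      _ = 1 := hA
  have hx2 : (0:ℝ) < x + 2 := by linarith
  rw [lt_div_iff₀ (by linarith : (0:ℝ) < 2*x+3)] at hcon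
  have hvT : (2*x+3)/(x+2)^2 ≤ v := by
    rw [hv, div_le_div_iff₀ (by positivity) hw]
    nlinarith
  have hv2 : v < 1 := by
    rw [hv, div_lt_one hw]; linarith
  have := keyv hx hvT hv2
  rw [hEq] at this
  exact lt_irrefl 1 this
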